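/- Let vᵢ, hᵢ, aᵢ ∈ R^d for i = 1,…,n with v = (1/n)∑ᵢvᵢ, let U₁,…,Uₙ be independent uniform random size-τm subsets of blocks, and define gᵗ = (1/n)∑ᵢ[hᵢ + (1/τ)(aᵢ − hᵢ)_{Uᵢ}]. Then E‖gᵗ − v‖² ≤ (2/n²)∑ᵢ[(1/τ + n − 1)‖aᵢ − vᵢ‖² + (1/τ − 1)‖hᵢ − vᵢ‖²]. -/

import Mathlib

open Finset

section Aux

set_option maxHeartbeats 1000000 in
private lemma marg1' {ι α : Type*} [Fintype ι] [DecidableEq ι] [DecidableEq α]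
    (s : Finset α) (i : ι) (f : α → ℝ) :
    ∑ U ∈ Fintype.piFinset (fun _ : ι => s), f (U i)
      = (s.card : ℝ) ^ (Fintype.card ι - 1) * ∑ A ∈ s, f A := by
  classical
  have h1 : ∀ U : ι → α, f (U i) = ∏ l : ι, (if l = i then f (U l) else 1) := by
    intro U
    rw [Finset.prod_eq_single i (fun l _ hl => by simp [hl]) (by simp)]
    simp
  rw [Finset.sum_congr rfl fun U _ => h1 U,
    ← Finset.prod_univ_sum (fun _ : ι => s) (fun l A => if l = i then f A else 1)]
  rw [Finset.prod_congr rfl (fun l _ => show (∑ A ∈ s, if l = i then f A else 1)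
      = if l = i then ∑ A ∈ s, f A else (s.card : ℝ) by split <;> simp)]
  rw [← Finset.mul_prod_erase Finset.univ _ (Finset.mem_univ i)]
  rw [Finset.prod_congr rfl (fun l hl => if_neg (Finset.mem_erase.1 hl).1),
    Finset.prod_const, Finset.card_erase_of_mem (Finset.mem_univ i), Finset.card_univ]
  simp [mul_comm]

set_option maxHeartbeats 1000000 in
private lemma marg2' {ι α : Type*} [Fintype ι] [DecidableEq ι] [DecidableEq α]
    (s : Finset α) {i j : ι} (hij : i ≠ j) (f g : α → ℝ) :
    ∑ U ∈ Fintype.piFinset (fun _ : ι => s), f (U i) * g (U j)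
      = (s.card : ℝ) ^ (Fintype.card ι - 2) * ((∑ A ∈ s, f A) * (∑ A ∈ s, g A)) := by
  classical
  have hji : j ∈ (Finset.univ : Finset ι).erase i :=
    Finset.mem_erase.2 ⟨Ne.symm hij, Finset.mem_univ j⟩
  have h1 : ∀ U : ι → α, f (U i) * g (U j)
      = ∏ l : ι, (if l = i then f (U l) else if l = j then g (U l) else 1) := by
    intro U
    rw [← Finset.mul_prod_erase Finset.univ _ (Finset.mem_univ i),
      ← Finset.mul_prod_erase _ _ hji]
    rw [Finset.prod_eq_one (fun l hl => by
      have h2 := Finset.mem_erase.1 hl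
      have h3 := Finset.mem_erase.1 h2.2
      simp [h2.1, h3.1])]
    simp [if_neg (Ne.symm hij)]
  rw [Finset.sum_congr rfl fun U _ => h1 U,
    ← Finset.prod_univ_sum (fun _ : ι => s)
      (fun l A => if l = i then f A else if l = j then g A else 1)]
  rw [Finset.prod_congr rfl (fun l _ =>
    show (∑ A ∈ s, if l = i then f A else if l = j then g A else 1)
      = (if l = i then ∑ A ∈ s, f A else if l = j then ∑ A ∈ s, g A else (s.card : ℝ)) by
    split
    · simp
    · split <;> simp)]
  rw [← Finset.mul_prod_erase Finset.univ _ (Finset.mem_univ i),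
    ← Finset.mul_prod_erase _ _ hji]
  rw [show (∏ l ∈ ((Finset.univ : Finset ι).erase i).erase j,
      (if l = i then ∑ A ∈ s, f A else if l = j then ∑ A ∈ s, g A else (s.card : ℝ)))
      = ∏ _l ∈ ((Finset.univ : Finset ι).erase i).erase j, (s.card : ℝ) from
    Finset.prod_congr rfl (fun l hl => by
      have h2 := Finset.mem_erase.1 hl
      have h3 := Finset.mem_erase.1 h2.2
      simp [h2.1, h3.1])]
  rw [Finset.prod_const, Finset.card_erase_of_mem hji,
    Finset.card_erase_of_mem (Finset.mem_univ i), Finset.card_univ,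
    if_pos rfl, if_neg (Ne.symm hij), if_pos rfl, Nat.sub_sub]
  ring

private lemma count_mem' {m k : ℕ} (hk : 0 < k) (e : Fin m) :
    ((Finset.powersetCard k (Finset.univ : Finset (Fin m))).filter (fun A => e ∈ A)).card
      = (m - 1).choose (k - 1) := by
  have h0 : ((Finset.powersetCard k (Finset.univ : Finset (Fin m))).filter
        (fun A => e ∈ A)).card
      = (Finset.powersetCard (k - 1) ((Finset.univ : Finset (Fin m)).erase e)).card := by
    apply Finset.card_bij' (fun A _ => A.erase e) (fun B _ => insert e B)
    · intro A hA
      exact Finset.insert_erase (Finset.mem_filter.1 hA).2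
    · intro B hB
      have h2 := Finset.mem_powersetCard.1 hB
      exact Finset.erase_insert (fun hc => (Finset.mem_erase.1 (h2.1 hc)).1 rfl)
    · intro A hA
      have h1 := Finset.mem_filter.1 hA
      have h2 := Finset.mem_powersetCard.1 h1.1
      exact Finset.mem_powersetCard.2 ⟨Finset.erase_subset_erase e h2.1,
        by rw [Finset.card_erase_of_mem h1.2, h2.2]⟩
    · intro B hB
      have h2 := Finset.mem_powersetCard.1 hB
      have he : e ∉ B := fun hc => (Finset.mem_erase.1 (h2.1 hc)).1 rfl
      refine Finset.mem_filter.2 ⟨Finset.mem_powersetCard.2 ⟨Finset.subset_univ _, ?_⟩,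
        Finset.mem_insert_self e B⟩
      rw [Finset.card_insert_of_notMem he, h2.2]
      omega
  rw [h0, Finset.card_powersetCard, Finset.card_erase_of_mem (Finset.mem_univ e),
    Finset.card_univ, Fintype.card_fin]

private lemma choose_ratio' {m k : ℕ} (hk : 0 < k) (hkm : k ≤ m) {τ : ℝ}
    (hτ : τ = (k : ℝ) / m) :
    (((m - 1).choose (k - 1) : ℕ) : ℝ) = τ * (m.choose k : ℕ) := by
  have hm : 0 < m := lt_of_lt_of_le hk hkm
  have hnat : m * (m - 1).choose (k - 1) = m.choose k * k := by
    have h := Nat.add_one_mul_choose_eq (m - 1) (k - 1)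
    have e1 : m - 1 + 1 = m := by omega
    have e2 : k - 1 + 1 = k := by omega
    simp only [Nat.succ_eq_add_one, e1, e2] at h
    omega
  have hm' : (m : ℝ) ≠ 0 := Nat.cast_ne_zero.2 hm.ne'
  have hc : (m : ℝ) * (((m - 1).choose (k - 1) : ℕ) : ℝ) = ((m.choose k : ℕ) : ℝ) * k := by
    exact_mod_cast congrArg (Nat.cast : ℕ → ℝ) hnat
  rw [hτ]
  field_simp
  linarith

end Aux

/-- `x_U`: keep the coordinates of `x` lying in blocks of `U`, zero the rest. -/
noncomputable def restr {d m : ℕ} (b : Fin d → Fin m) (U : Finset (Fin m))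
    (x : EuclideanSpace ℝ (Fin d)) : EuclideanSpace ℝ (Fin d) :=
  (WithLp.equiv 2 (Fin d → ℝ)).symm (fun j => if b j ∈ U then x j else 0)

section Aux2

private lemma euclid_inner' (d : ℕ) (x y : EuclideanSpace ℝ (Fin d)) :
    (inner ℝ x y : ℝ) = ∑ t, x t * y t := by
  simp [PiLp.inner_apply, RCLike.inner_apply, conj_trivial]
  exact Finset.sum_congr rfl fun t _ => mul_comm _ _

private lemma euclid_normsq' (d : ℕ) (x : EuclideanSpace ℝ (Fin d)) :
    ‖x‖ ^ 2 = ∑ t, x t ^ 2 := by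
  rw [← real_inner_self_eq_norm_sq, euclid_inner']
  exact Finset.sum_congr rfl fun t _ => (sq (x t)).symm

private lemma sum_restr' {d m k : ℕ} (hk : 0 < k) (b : Fin d → Fin m)
    (x : EuclideanSpace ℝ (Fin d)) :
    ∑ A ∈ Finset.powersetCard k (Finset.univ : Finset (Fin m)), restr b A x
      = (((m - 1).choose (k - 1) : ℕ) : ℝ) • x := by
  apply PiLp.ext
  intro t
  rw [WithLp.ofLp_sum, Finset.sum_apply, PiLp.smul_apply]
  have h1 : ∀ A ∈ Finset.powersetCard k (Finset.univ : Finset (Fin m)),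
      restr b A x t = if b t ∈ A then x t else 0 := fun A _ => rfl
  rw [Finset.sum_congr rfl h1, ← Finset.sum_filter, Finset.sum_const, count_mem' hk,
    nsmul_eq_mul]
  rfl

private lemma sum_restr_normsq' {d m k : ℕ} (hk : 0 < k) (b : Fin d → Fin m)
    (x : EuclideanSpace ℝ (Fin d)) :
    ∑ A ∈ Finset.powersetCard k (Finset.univ : Finset (Fin m)), ‖restr b A x‖ ^ 2
      = (((m - 1).choose (k - 1) : ℕ) : ℝ) * ‖x‖ ^ 2 := by
  simp_rw [euclid_normsq']
  rw [Finset.sum_comm, Finset.mul_sum]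
  refine Finset.sum_congr rfl fun t _ => ?_
  have h1 : ∀ A ∈ Finset.powersetCard k (Finset.univ : Finset (Fin m)),
      restr b A x t ^ 2 = if b t ∈ A then x t ^ 2 else 0 := by
    intro A _
    show (if b t ∈ A then x t else 0) ^ 2 = _
    split <;> simp
  rw [Finset.sum_congr rfl h1, ← Finset.sum_filter, Finset.sum_const, count_mem' hk,
    nsmul_eq_mul]

set_option maxHeartbeats 1000000 in
private lemma marg2_inner' {ι α : Type*} [Fintype ι] [DecidableEq ι] [DecidableEq α]
    {d : ℕ} (s : Finset α) {i j : ι} (hij : i ≠ j)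
    (X Y : α → EuclideanSpace ℝ (Fin d)) :
    ∑ U ∈ Fintype.piFinset (fun _ : ι => s), (inner ℝ (X (U i)) (Y (U j)) : ℝ)
      = (s.card : ℝ) ^ (Fintype.card ι - 2)
          * (inner ℝ (∑ A ∈ s, X A) (∑ A ∈ s, Y A) : ℝ) := by
  classical
  have h1 : ∀ U : ι → α, (inner ℝ (X (U i)) (Y (U j)) : ℝ) = ∑ t, X (U i) t * Y (U j) t :=
    fun U => euclid_inner' d _ _
  rw [Finset.sum_congr rfl fun U _ => h1 U, Finset.sum_comm, euclid_inner']
  rw [Finset.mul_sum]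
  refine Finset.sum_congr rfl fun t _ => ?_
  rw [marg2' s hij (fun A => X A t) (fun A => Y A t), WithLp.ofLp_sum, Finset.sum_apply, WithLp.ofLp_sum, Finset.sum_apply]

end Aux2

set_option maxHeartbeats 2000000 in
/-- For fixed vectors `vᵢ, hᵢ, aᵢ` with `v = (1/n)∑ᵢvᵢ`, and independent uniform
size-`τm` block subsets `U₁,…,Uₙ` (encoded by uniform averaging over all tuples),
the estimator `gᵗ = (1/n)∑ᵢ[hᵢ + (1/τ)(aᵢ − hᵢ)_{Uᵢ}]` satisfies
`E‖gᵗ − v‖² ≤ (2/n²)∑ᵢ[(1/τ + n − 1)‖aᵢ − vᵢ‖² + (1/τ − 1)‖hᵢ − vᵢ‖²]`. -/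
theorem stmt10 {d m n : ℕ} (hn : 0 < n) (b : Fin d → Fin m)
    (k : ℕ) (hk : 0 < k) (hkm : k ≤ m) (τ : ℝ) (hτ : τ = (k : ℝ) / m)
    (v h a : Fin n → EuclideanSpace ℝ (Fin d))
    (vbar : EuclideanSpace ℝ (Fin d)) (hvbar : vbar = (n : ℝ)⁻¹ • ∑ i, v i) :
    ((m.choose k : ℝ))⁻¹ ^ n *
      ∑ U ∈ Fintype.piFinset
          (fun _ : Fin n => Finset.powersetCard k (Finset.univ : Finset (Fin m))),
        ‖(n : ℝ)⁻¹ • ∑ i, (h i + τ⁻¹ • restr b (U i) (a i - h i)) - vbar‖ ^ 2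
      ≤ 2 / (n : ℝ) ^ 2 *
          ∑ i, ((τ⁻¹ + n - 1) * ‖a i - v i‖ ^ 2 + (τ⁻¹ - 1) * ‖h i - v i‖ ^ 2) := by
  classical
  have hm : 0 < m := lt_of_lt_of_le hk hkm
  set S : Finset (Finset (Fin m)) :=
    Finset.powersetCard k (Finset.univ : Finset (Fin m)) with hS
  set N : ℝ := (m.choose k : ℝ) with hNdef
  have hScard : (S.card : ℝ) = N := by
    rw [hS, Finset.card_powersetCard, Finset.card_univ, Fintype.card_fin]
  have hN : (0 : ℝ) < N := by
    rw [hNdef]; exact_mod_cast Nat.choose_pos hkm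
  have hτ0 : (0 : ℝ) < τ := by
    rw [hτ]
    exact div_pos (by exact_mod_cast hk) (by exact_mod_cast hm)
  have hτ1 : τ ≤ 1 := by
    rw [hτ, div_le_one (by exact_mod_cast hm)]
    exact_mod_cast hkm
  have hτinv : 1 ≤ τ⁻¹ := by
    rw [le_inv_comm₀ one_pos hτ0]
    simpa using hτ1
  have hn1 : (1 : ℝ) ≤ n := by exact_mod_cast hn
  have hn0 : (0 : ℝ) < n := by exact_mod_cast hn
  -- the vectors
  set w : Fin n → EuclideanSpace ℝ (Fin d) := fun i => a i - h i with hw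
  set X : Fin n → Finset (Fin m) → EuclideanSpace ℝ (Fin d) :=
    fun i A => (h i - v i) + τ⁻¹ • restr b A (w i) with hX
  have hr : (((m - 1).choose (k - 1) : ℕ) : ℝ) = τ * N := choose_ratio' hk hkm hτ
  -- mean of X i
  have hmean : ∀ i, ∑ A ∈ S, X i A = N • (a i - v i) := by
    intro i
    rw [hX]
    simp only
    rw [Finset.sum_add_distrib, Finset.sum_const, ← Finset.smul_sum, hS, sum_restr' hk, hr,
      smul_smul]
    rw [show (Finset.powersetCard k (Finset.univ : Finset (Fin m))).card • (h i - v i)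
        = (S.card : ℝ) • (h i - v i) from (Nat.cast_smul_eq_nsmul ℝ _ _).symm, hScard,
      show τ⁻¹ * (τ * N) = N from by field_simp, ← smul_add]
    congr 1
    simp only [hw]
    abel
  -- second moment of X i
  have hsq : ∀ i, N⁻¹ * ∑ A ∈ S, ‖X i A‖ ^ 2
      = ‖a i - v i‖ ^ 2 + (τ⁻¹ - 1) * ‖w i‖ ^ 2 := by
    intro i
    have expand : ∀ A ∈ S, ‖X i A‖ ^ 2
        = ‖h i - v i‖ ^ 2 + 2 * τ⁻¹ * (inner ℝ (h i - v i) (restr b A (w i)) : ℝ)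
          + τ⁻¹ ^ 2 * ‖restr b A (w i)‖ ^ 2 := by
      intro A _
      rw [hX]
      simp only
      rw [norm_add_sq_real, real_inner_smul_right, norm_smul, mul_pow]
      have : ‖τ⁻¹‖ = τ⁻¹ := abs_of_nonneg (by positivity)
      rw [this]
      ring
    rw [Finset.sum_congr rfl expand, Finset.sum_add_distrib, Finset.sum_add_distrib,
      Finset.sum_const, ← Finset.mul_sum, ← Finset.mul_sum, ← inner_sum, hS,
      sum_restr' hk, sum_restr_normsq' hk, hr, real_inner_smul_right]
    have hsv : a i - v i = (h i - v i) + w i := by simp only [hw]; abel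
    have hnorm : ‖a i - v i‖ ^ 2
        = ‖h i - v i‖ ^ 2 + 2 * (inner ℝ (h i - v i) (w i) : ℝ) + ‖w i‖ ^ 2 := by
      rw [hsv, norm_add_sq_real]
    rw [show (S.card) • (‖h i - v i‖ ^ 2) = (S.card : ℝ) * ‖h i - v i‖ ^ 2 from
      nsmul_eq_mul _ _, hScard, hnorm]
    field_simp
    ring
  -- the summand rewriting
  have hsummand : ∀ U ∈ Fintype.piFinset (fun _ : Fin n => S),
      ‖(n : ℝ)⁻¹ • ∑ i, (h i + τ⁻¹ • restr b (U i) (a i - h i)) - vbar‖ ^ 2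
        = ((n : ℝ)⁻¹) ^ 2 * ‖∑ i, X i (U i)‖ ^ 2 := by
    intro U _
    rw [hvbar, ← smul_sub, ← Finset.sum_sub_distrib, norm_smul, mul_pow]
    congr 2
    · rw [Real.norm_eq_abs, abs_of_nonneg (by positivity)]
    · congr 1
      refine Finset.sum_congr rfl fun i _ => ?_
      rw [hX, hw]
      simp only
      abel
  rw [Finset.sum_congr rfl hsummand, ← Finset.mul_sum,
    show (N⁻¹ ^ n * (((n : ℝ)⁻¹) ^ 2 * ∑ U ∈ Fintype.piFinset (fun _ : Fin n => S),
        ‖∑ i, X i (U i)‖ ^ 2))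
      = ((n : ℝ)⁻¹) ^ 2 * (N⁻¹ ^ n * ∑ U ∈ Fintype.piFinset (fun _ : Fin n => S),
        ‖∑ i, X i (U i)‖ ^ 2) from by ring]
  -- key identity
  have hpair : ∀ i j : Fin n,
      N⁻¹ ^ n * ∑ U ∈ Fintype.piFinset (fun _ : Fin n => S),
          (inner ℝ (X i (U i)) (X j (U j)) : ℝ)
        = (inner ℝ (a i - v i) (a j - v j) : ℝ)
          + (if j = i then (τ⁻¹ - 1) * ‖w i‖ ^ 2 else 0) := by
    intro i j
    rcases eq_or_ne j i with hij | hij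
    · subst hij
      have h1 : ∀ U ∈ Fintype.piFinset (fun _ : Fin n => S),
          (inner ℝ (X j (U j)) (X j (U j)) : ℝ) = ‖X j (U j)‖ ^ 2 :=
        fun U _ => real_inner_self_eq_norm_sq _
      rw [Finset.sum_congr rfl h1, marg1' S j (fun A => ‖X j A‖ ^ 2), hScard,
        Fintype.card_fin, if_pos rfl, real_inner_self_eq_norm_sq]
      have hNn : N⁻¹ ^ n * N ^ (n - 1) = N⁻¹ := by
        obtain ⟨p, rfl⟩ : ∃ p, n = p + 1 := ⟨n - 1, by omega⟩
        rw [Nat.add_sub_cancel, pow_succ, mul_comm (N⁻¹ ^ p) N⁻¹, mul_assoc, ← mul_pow,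
          inv_mul_cancel₀ hN.ne', one_pow, mul_one]
      rw [← mul_assoc, hNn, hsq j]
    · have h2n : 2 ≤ n := by
        have hnt : Nontrivial (Fin n) := ⟨⟨j, i, hij⟩⟩
        have := Fintype.one_lt_card (α := Fin n)
        simp at this; omega
      rw [marg2_inner' S (Ne.symm hij) (X i) (X j), hmean i, hmean j,
        real_inner_smul_left, real_inner_smul_right, hScard, Fintype.card_fin, if_neg hij,
        add_zero]
      have hNn : N⁻¹ ^ n * (N ^ (n - 2) * (N * N)) = 1 := by
        obtain ⟨p, rfl⟩ : ∃ p, n = p + 2 := ⟨n - 2, by omega⟩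
        rw [Nat.add_sub_cancel, show N ^ p * (N * N) = N ^ (p + 2) from by
          rw [pow_add]; ring, ← mul_pow, inv_mul_cancel₀ hN.ne', one_pow]
      calc N⁻¹ ^ n * (N ^ (n - 2) * (N * (N * (inner ℝ (a i - v i) (a j - v j) : ℝ))))
          = (N⁻¹ ^ n * (N ^ (n - 2) * (N * N))) * (inner ℝ (a i - v i) (a j - v j) : ℝ) := by
            ring
        _ = (inner ℝ (a i - v i) (a j - v j) : ℝ) := by rw [hNn, one_mul]
  have hkey : N⁻¹ ^ n * ∑ U ∈ Fintype.piFinset (fun _ : Fin n => S), ‖∑ i, X i (U i)‖ ^ 2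
      = ‖∑ i, (a i - v i)‖ ^ 2 + ∑ i, (τ⁻¹ - 1) * ‖w i‖ ^ 2 := by
    have hip2 : ∀ U ∈ Fintype.piFinset (fun _ : Fin n => S),
        ‖∑ i, X i (U i)‖ ^ 2 = ∑ i, ∑ j, (inner ℝ (X i (U i)) (X j (U j)) : ℝ) := by
      intro U _
      rw [← real_inner_self_eq_norm_sq, sum_inner]
      exact Finset.sum_congr rfl fun i _ => inner_sum _ _ _
    have swap : ∑ U ∈ Fintype.piFinset (fun _ : Fin n => S),
          ∑ i, ∑ j, (inner ℝ (X i (U i)) (X j (U j)) : ℝ)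
        = ∑ i, ∑ j, ∑ U ∈ Fintype.piFinset (fun _ : Fin n => S),
            (inner ℝ (X i (U i)) (X j (U j)) : ℝ) := by
      rw [Finset.sum_comm]
      exact Finset.sum_congr rfl fun i _ => Finset.sum_comm
    have hpair' : ∀ i j : Fin n,
        ∑ U ∈ Fintype.piFinset (fun _ : Fin n => S),
            N⁻¹ ^ n * (inner ℝ (X i (U i)) (X j (U j)) : ℝ)
          = (inner ℝ (a i - v i) (a j - v j) : ℝ)
            + (if j = i then (τ⁻¹ - 1) * ‖w i‖ ^ 2 else 0) := by
      intro i j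
      rw [← Finset.mul_sum]
      exact hpair i j
    rw [Finset.sum_congr rfl hip2, swap]
    simp only [Finset.mul_sum]
    rw [Finset.sum_congr rfl (fun i (_ : i ∈ Finset.univ) =>
      Finset.sum_congr rfl (fun j (_ : j ∈ Finset.univ) => hpair' i j))]
    rw [Finset.sum_congr rfl (fun i (_ : i ∈ Finset.univ) => Finset.sum_add_distrib),
      Finset.sum_add_distrib]
    congr 1
    · have hns : ‖∑ i, (a i - v i)‖ ^ 2
          = ∑ i, ∑ j, (inner ℝ (a i - v i) (a j - v j) : ℝ) := by
        rw [← real_inner_self_eq_norm_sq (∑ i, (a i - v i)), sum_inner]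
        exact Finset.sum_congr rfl fun i _ => inner_sum _ _ _
      exact hns.symm
    · refine Finset.sum_congr rfl fun i _ => ?_
      rw [Finset.sum_ite_eq' Finset.univ i (fun _ => (τ⁻¹ - 1) * ‖w i‖ ^ 2),
        if_pos (Finset.mem_univ i)]
  rw [hkey]
  -- final estimates
  have hCS : ‖∑ i, (a i - v i)‖ ^ 2 ≤ (n : ℝ) * ∑ i, ‖a i - v i‖ ^ 2 := by
    have h1 : ‖∑ i, (a i - v i)‖ ≤ ∑ i, ‖a i - v i‖ := norm_sum_le _ _
    have h2 : (∑ i, ‖a i - v i‖) ^ 2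
        ≤ ((Finset.univ : Finset (Fin n)).card : ℝ) * ∑ i, ‖a i - v i‖ ^ 2 :=
      sq_sum_le_card_mul_sum_sq
    have h3 : ‖∑ i, (a i - v i)‖ ^ 2 ≤ (∑ i, ‖a i - v i‖) ^ 2 :=
      pow_le_pow_left₀ (norm_nonneg _) h1 2
    have h4 : ((Finset.univ : Finset (Fin n)).card : ℝ) = (n : ℝ) := by simp
    rw [h4] at h2
    linarith
  have hwb : ∀ i, ‖w i‖ ^ 2 ≤ 2 * ‖a i - v i‖ ^ 2 + 2 * ‖h i - v i‖ ^ 2 := by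
    intro i
    have hwi : w i = (a i - v i) - (h i - v i) := by simp only [hw]; abel
    rw [hwi]
    have h1 : ‖(a i - v i) - (h i - v i)‖ ≤ ‖a i - v i‖ + ‖h i - v i‖ := norm_sub_le _ _
    have h2 : ‖(a i - v i) - (h i - v i)‖ ^ 2 ≤ (‖a i - v i‖ + ‖h i - v i‖) ^ 2 :=
      pow_le_pow_left₀ (norm_nonneg _) h1 2
    nlinarith [sq_nonneg (‖a i - v i‖ - ‖h i - v i‖)]
  have hterm : ∀ i ∈ (Finset.univ : Finset (Fin n)),
      (n : ℝ) * ‖a i - v i‖ ^ 2 + (τ⁻¹ - 1) * ‖w i‖ ^ 2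
        ≤ 2 * ((τ⁻¹ + n - 1) * ‖a i - v i‖ ^ 2 + (τ⁻¹ - 1) * ‖h i - v i‖ ^ 2) := by
    intro i _
    have h5 : (τ⁻¹ - 1) * ‖w i‖ ^ 2
        ≤ (τ⁻¹ - 1) * (2 * ‖a i - v i‖ ^ 2 + 2 * ‖h i - v i‖ ^ 2) :=
      mul_le_mul_of_nonneg_left (hwb i) (by linarith)
    nlinarith [sq_nonneg ‖a i - v i‖, hn1]
  calc ((n : ℝ)⁻¹) ^ 2 * (‖∑ i, (a i - v i)‖ ^ 2 + ∑ i, (τ⁻¹ - 1) * ‖w i‖ ^ 2)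
      ≤ ((n : ℝ)⁻¹) ^ 2 * (((n : ℝ) * ∑ i, ‖a i - v i‖ ^ 2)
          + ∑ i, (τ⁻¹ - 1) * ‖w i‖ ^ 2) := by
        apply mul_le_mul_of_nonneg_left _ (by positivity)
        exact add_le_add hCS le_rfl
    _ = ((n : ℝ)⁻¹) ^ 2 * ∑ i, ((n : ℝ) * ‖a i - v i‖ ^ 2 + (τ⁻¹ - 1) * ‖w i‖ ^ 2) := by
        rw [Finset.sum_add_distrib]
        simp only [← Finset.mul_sum]
    _ ≤ ((n : ℝ)⁻¹) ^ 2 * ∑ i, 2 * ((τ⁻¹ + n - 1) * ‖a i - v i‖ ^ 2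
          + (τ⁻¹ - 1) * ‖h i - v i‖ ^ 2) := by
        apply mul_le_mul_of_nonneg_left _ (by positivity)
        exact Finset.sum_le_sum hterm
    _ = 2 / (n : ℝ) ^ 2 *
          ∑ i, ((τ⁻¹ + n - 1) * ‖a i - v i‖ ^ 2 + (τ⁻¹ - 1) * ‖h i - v i‖ ^ 2) := by
        rw [← Finset.mul_sum, ← mul_assoc]
        congr 1
        rw [div_eq_mul_inv]
        ring
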